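/- Let S̄ ⊆ {1,…,d} be a closed set and let S̲ = ⌊S̄⌋ be its basis. Then for every j ∈ S̲, the set S̄ ∖ {j} is closed, i.e. ⌈S̄ ∖ {j}⌉ = S̄ ∖ {j}. -/
import Mathlib


/-- Vertex type: `some i` is the feature vertex `i`, `none` is the target vertex `Y`. -/
abbrev Vtx (d : ℕ) := Option (Fin d)

/-- `PathTo E j p` means `p` is a directed path in the graph with edge relation `E`
from the feature vertex `j` to the target vertex `Y` (encoded as `none`). -/
def PathTo {d : ℕ} (E : Vtx d → Vtx d → Prop) (j : Fin d) (p : List (Vtx d)) : Prop :=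
  p.Chain' E ∧ p.head? = some (some j) ∧ p.getLast? = some none

open Classical in
/-- The basis `⌊S⌋` of `S`: all `j ∈ S` having a directed path to `Y`
whose only vertex in `S` is `j`. -/
noncomputable def bas {d : ℕ} (E : Vtx d → Vtx d → Prop) (S : Finset (Fin d)) :
    Finset (Fin d) :=
  S.filter fun j => ∃ p : List (Vtx d), PathTo E j p ∧ ∀ i ∈ S, some i ∈ p → i = j

open Classical in
/-- The closure `⌈S⌉` of `S`: all `j ∈ {1,…,d}` such that every directed path
from `j` to `Y` contains a vertex of `S`. -/
noncomputable def clos {d : ℕ} (E : Vtx d → Vtx d → Prop) (S : Finset (Fin d)) :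
    Finset (Fin d) :=
  Finset.univ.filter fun j => ∀ p : List (Vtx d), PathTo E j p → ∃ i ∈ S, some i ∈ p

/-- Lemma 1(1): removing a basis element from a closed set yields a closed set. -/
theorem stmt0 (d : ℕ) (E : Vtx d → Vtx d → Prop)
    (hacyc : ∀ v : Vtx d, ¬ Relation.TransGen E v v)
    (hY : ∀ v : Vtx d, ¬ E none v)
    (S : Finset (Fin d)) (hclosed : clos E S = S)
    (j : Fin d) (hj : j ∈ bas E S) :
    clos E (S.erase j) = S.erase j := by
  ext k
  simp only [clos, Finset.mem_filter, Finset.mem_univ, true_and]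
  constructor
  · intro h
    have hkS : k ∈ S := by
      rw [← hclosed]
      simp only [clos, Finset.mem_filter, Finset.mem_univ, true_and]
      intro p hp
      obtain ⟨i, hi, hip⟩ := h p hp
      exact ⟨i, (Finset.mem_erase.mp hi).2, hip⟩
    refine Finset.mem_erase.mpr ⟨?_, hkS⟩
    intro hkj
    subst hkj
    obtain ⟨hjS, p, hp, honly⟩ : k ∈ S ∧ ∃ p, PathTo E k p ∧ ∀ i ∈ S, some i ∈ p → i = k := by
      simpa [bas] using hj
    obtain ⟨i, hi, hip⟩ := h p hp
    obtain ⟨hne, hiS⟩ := Finset.mem_erase.mp hi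
    exact hne (honly i hiS hip)
  · intro hk p hp
    refine ⟨k, hk, ?_⟩
    have := hp.2.1
    cases p with
    | nil => simp at this
    | cons a t =>
      simp only [List.head?_cons, Option.some.injEq] at this
      simp [this]
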